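/- Let f : [n] → ℝ with bounds l = −u, u : {1,…,n−1} → ℝ with u(t) > 0 for all t, and u_M = max_t u(t). If (x,y) is a violated pair, then the total number of violated unordered pairs of f is at least min{ vs_f(x,y) / (2·u_M), n − 1 }. -/
import Mathlib


open Finset
open scoped Classical

/-- The one-dimensional quasimetric of bounds `(l,u)`. -/
def m1 (l u : ℕ → ℝ) (x y : ℕ) : ℝ :=
  (∑ t ∈ Finset.Ico y x, u t) - ∑ t ∈ Finset.Ico x y, l t

/-- The violation score of a pair `(x,y)` for `h : [n] → ℝ`. -/
def vs1 (l u : ℕ → ℝ) (h : ℕ → ℝ) (x y : ℕ) : ℝ :=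
  max (h x - h y - m1 l u x y) (h y - h x - m1 l u y x)

lemma vs1_symm (l u h : ℕ → ℝ) (a b : ℕ) : vs1 l u h a b = vs1 l u h b a :=
  max_comm _ _

lemma vs1_eq_abs (u f : ℕ → ℝ) (a b : ℕ) (hab : a < b) :
    vs1 (fun t => -u t) u f a b = |f a - f b| - ∑ t ∈ Finset.Ico a b, u t := by
  have he : Finset.Ico b a = (∅ : Finset ℕ) := Finset.Ico_eq_empty (by omega)
  rw [vs1, m1, m1, he, abs_eq_max_neg, ← max_sub_sub_right]
  congr 1 <;> · simp only [Finset.sum_empty, Finset.sum_neg_distrib]; ring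

/-- if `(x,y)` is a violated pair, then the total number of
violated unordered pairs of `f` is at least `min{vs_f(x,y)/(2·u_M), n − 1}`. -/
theorem stmt18 (n : ℕ) (hn : 2 ≤ n)
    (u : ℕ → ℝ) (hu : ∀ t : ℕ, 1 ≤ t → t + 1 ≤ n → 0 < u t)
    (f : ℕ → ℝ)
    (uM : ℝ)
    (huM : uM = (Finset.Icc 1 (n - 1)).sup'
      (Finset.nonempty_Icc.mpr (by omega)) u)
    (x y : ℕ) (hx : 1 ≤ x) (hxy : x < y) (hy : y ≤ n)
    (hviol : 0 < vs1 (fun t => -u t) u f x y) :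
    min (vs1 (fun t => -u t) u f x y / (2 * uM)) ((n : ℝ) - 1)
      ≤ ((((Finset.Icc 1 n) ×ˢ (Finset.Icc 1 n)).filter
          (fun p : ℕ × ℕ => p.1 < p.2 ∧ 0 < vs1 (fun t => -u t) u f p.1 p.2)).card : ℝ) := by
  classical
  set l : ℕ → ℝ := fun t => -u t with hl
  set s : ℝ := vs1 l u f x y with hs
  have huM_mem : ∀ t, 1 ≤ t → t ≤ n - 1 → u t ≤ uM := by
    intro t h1 h2
    rw [huM]
    exact Finset.le_sup' u (Finset.mem_Icc.mpr ⟨h1, h2⟩)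
  have huM_pos : 0 < uM :=
    lt_of_lt_of_le (hu 1 le_rfl (by omega)) (huM_mem 1 le_rfl (by omega))
  set c : ℝ := s / (2 * uM) with hc
  have hc_pos : 0 < c := div_pos hviol (by linarith)
  set kc : ℕ := ⌈c⌉₊ with hkc
  have hkc1 : 1 ≤ kc := Nat.one_le_iff_ne_zero.mpr (Nat.pos_iff_ne_zero.mp (Nat.ceil_pos.mpr hc_pos))
  have hkc_lt : ((kc : ℝ) - 1) < c := by
    have h := Nat.ceil_lt_add_one (le_of_lt hc_pos)
    rw [hkc]; push_cast; linarith
  have hc_le : c ≤ (kc : ℝ) := Nat.le_ceil c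
  have hseq : s = 2 * uM * c := by
    rw [hc]; field_simp
  -- sum bound
  have hsum_le : ∀ a b : ℕ, 1 ≤ a → b ≤ n →
      (∑ t ∈ Finset.Ico a b, u t) ≤ ((b - a : ℕ) : ℝ) * uM := by
    intro a b ha hb
    calc (∑ t ∈ Finset.Ico a b, u t) ≤ ∑ t ∈ Finset.Ico a b, uM := by
          apply Finset.sum_le_sum
          intro t ht
          rw [Finset.mem_Ico] at ht
          exact huM_mem t (le_trans ha ht.1) (by omega)
      _ = ((b - a : ℕ) : ℝ) * uM := by rw [Finset.sum_const, Nat.card_Ico, nsmul_eq_mul]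
  -- key lemma: each qualifying z yields a violated pair with x or with y
  have key : ∀ z, 1 ≤ z → z ≤ n → z ≠ x → z ≠ y → x - z < kc → z - y < kc →
      0 < vs1 l u f z x ∨ 0 < vs1 l u f z y := by
    intro z h1 h2 hzx hzy hxzk hzyk
    by_contra hcon
    push_neg at hcon
    obtain ⟨hA, hB⟩ := hcon
    have hsabs : s = |f x - f y| - ∑ t ∈ Finset.Ico x y, u t := by
      rw [hs, hl, vs1_eq_abs u f x y hxy]
    have htri : |f x - f y| ≤ |f x - f z| + |f z - f y| := abs_sub_le _ _ _
    rcases lt_trichotomy z x with hlt | heq | hgt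
    · -- z < x < y
      have hAe : vs1 l u f z x = |f z - f x| - ∑ t ∈ Finset.Ico z x, u t := by
        rw [hl, vs1_eq_abs u f z x hlt]
      have hBe : vs1 l u f z y = |f z - f y| - ∑ t ∈ Finset.Ico z y, u t := by
        rw [hl, vs1_eq_abs u f z y (by omega)]
      have hsplit : (∑ t ∈ Finset.Ico z y, u t)
          = (∑ t ∈ Finset.Ico z x, u t) + ∑ t ∈ Finset.Ico x y, u t :=
        (Finset.sum_Ico_consecutive u (by omega) (by omega)).symm
      have hb1 : (∑ t ∈ Finset.Ico z x, u t) ≤ ((x - z : ℕ) : ℝ) * uM :=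
        hsum_le z x h1 (by omega)
      have hcast : ((x - z : ℕ) : ℝ) ≤ (kc : ℝ) - 1 := by
        have h' : x - z + 1 ≤ kc := hxzk
        have h'' : ((x - z + 1 : ℕ) : ℝ) ≤ (kc : ℝ) := Nat.cast_le.mpr h'
        push_cast at h''
        linarith
      have h1' : |f z - f x| ≤ ∑ t ∈ Finset.Ico z x, u t := by
        rw [hAe] at hA; linarith
      have h2' : |f z - f y| ≤ ∑ t ∈ Finset.Ico z y, u t := by
        rw [hBe] at hB; linarith
      have habs : |f x - f z| = |f z - f x| := abs_sub_comm _ _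
      have : s ≤ 2 * (((x - z : ℕ) : ℝ) * uM) := by
        rw [hsabs]
        rw [hsplit] at h2'
        linarith
      have : s < 2 * uM * c := by
        have h3 : ((x - z : ℕ) : ℝ) < c := lt_of_le_of_lt hcast hkc_lt
        nlinarith
      linarith [hseq ▸ this]
    · exact hzx heq
    · rcases lt_trichotomy z y with hlt2 | heq2 | hgt2
      · -- x < z < y
        have hAe : vs1 l u f z x = |f x - f z| - ∑ t ∈ Finset.Ico x z, u t := by
          rw [vs1_symm, hl, vs1_eq_abs u f x z hgt]
        have hBe : vs1 l u f z y = |f z - f y| - ∑ t ∈ Finset.Ico z y, u t := by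
          rw [hl, vs1_eq_abs u f z y hlt2]
        have hsplit : (∑ t ∈ Finset.Ico x y, u t)
            = (∑ t ∈ Finset.Ico x z, u t) + ∑ t ∈ Finset.Ico z y, u t :=
          (Finset.sum_Ico_consecutive u (by omega) (by omega)).symm
        have h1' : |f x - f z| ≤ ∑ t ∈ Finset.Ico x z, u t := by
          rw [hAe] at hA; linarith
        have h2' : |f z - f y| ≤ ∑ t ∈ Finset.Ico z y, u t := by
          rw [hBe] at hB; linarith
        have : s ≤ 0 := by rw [hsabs, hsplit]; linarith
        linarith
      · exact hzy heq2
      · -- x < y < z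
        have hAe : vs1 l u f z x = |f x - f z| - ∑ t ∈ Finset.Ico x z, u t := by
          rw [vs1_symm, hl, vs1_eq_abs u f x z hgt]
        have hBe : vs1 l u f z y = |f y - f z| - ∑ t ∈ Finset.Ico y z, u t := by
          rw [vs1_symm, hl, vs1_eq_abs u f y z hgt2]
        have hsplit : (∑ t ∈ Finset.Ico x z, u t)
            = (∑ t ∈ Finset.Ico x y, u t) + ∑ t ∈ Finset.Ico y z, u t :=
          (Finset.sum_Ico_consecutive u (by omega) (by omega)).symm
        have hb1 : (∑ t ∈ Finset.Ico y z, u t) ≤ ((z - y : ℕ) : ℝ) * uM :=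
          hsum_le y z (by omega) h2
        have hcast : ((z - y : ℕ) : ℝ) ≤ (kc : ℝ) - 1 := by
          have h' : z - y + 1 ≤ kc := hzyk
          have h'' : ((z - y + 1 : ℕ) : ℝ) ≤ (kc : ℝ) := Nat.cast_le.mpr h'
          push_cast at h''
          linarith
        have h1' : |f x - f z| ≤ ∑ t ∈ Finset.Ico x z, u t := by
          rw [hAe] at hA; linarith
        have h2' : |f y - f z| ≤ ∑ t ∈ Finset.Ico y z, u t := by
          rw [hBe] at hB; linarith
        have habs : |f z - f y| = |f y - f z| := abs_sub_comm _ _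
        have : s ≤ 2 * (((z - y : ℕ) : ℝ) * uM) := by
          rw [hsabs]
          rw [hsplit] at h1'
          linarith
        have : s < 2 * uM * c := by
          have h3 : ((z - y : ℕ) : ℝ) < c := lt_of_le_of_lt hcast hkc_lt
          nlinarith
        linarith [hseq ▸ this]
  set P := ((Finset.Icc 1 n ×ˢ Finset.Icc 1 n).filter
      (fun p : ℕ × ℕ => p.1 < p.2 ∧ 0 < vs1 l u f p.1 p.2)) with hP
  -- counting lemma
  have count : ∀ W : Finset ℕ,
      (∀ z ∈ W, 1 ≤ z ∧ z ≤ n ∧ z ≠ x ∧ z ≠ y ∧ x - z < kc ∧ z - y < kc) →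
      W.card + 1 ≤ P.card := by
    intro W hW
    have hxW : x ∉ W := fun h => (hW x h).2.2.1 rfl
    rw [← Finset.card_insert_of_notMem hxW]
    set φ : ℕ → ℕ × ℕ := fun z =>
      if z = x then (x, y) else
      if 0 < vs1 l u f z x then (min z x, max z x) else (min z y, max z y) with hφ
    set ψ : ℕ × ℕ → ℕ := fun p =>
      if p.1 = x ∧ p.2 = y then x else if p.1 = x ∨ p.1 = y then p.2 else p.1 with hψdef
    have hψ : ∀ z ∈ insert x W, ψ (φ z) = z := by
      intro z hz
      rcases Finset.mem_insert.mp hz with rfl | hzW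
      · simp [hφ, hψdef]
      · obtain ⟨h1, h2, hzx, hzy, hxzk, hzyk⟩ := hW z hzW
        by_cases hv : 0 < vs1 l u f z x
        · rcases lt_or_gt_of_ne hzx with hlt | hgt
          · have hφz : φ z = (z, x) := by
              rw [hφ]
              simp only [if_neg hzx, if_pos hv, min_eq_left hlt.le, max_eq_right hlt.le]
            rw [hφz]
            simp only [hψdef]
            split_ifs <;> omega
          · have hφz : φ z = (x, z) := by
              rw [hφ]
              simp only [if_neg hzx, if_pos hv, min_eq_right hgt.le, max_eq_left hgt.le]
            rw [hφz]
            simp only [hψdef]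
            split_ifs <;> first | omega | exact absurd (Or.inl trivial) (by assumption) | exact absurd (Or.inr trivial) (by assumption)
        · rcases lt_or_gt_of_ne hzy with hlt | hgt
          · have hφz : φ z = (z, y) := by
              rw [hφ]
              simp only [if_neg hzx, if_neg hv, min_eq_left hlt.le, max_eq_right hlt.le]
            rw [hφz]
            simp only [hψdef]
            split_ifs <;> omega
          · have hφz : φ z = (y, z) := by
              rw [hφ]
              simp only [if_neg hzx, if_neg hv, min_eq_right hgt.le, max_eq_left hgt.le]
            rw [hφz]
            simp only [hψdef]
            split_ifs <;> first | omega | exact absurd (Or.inl trivial) (by assumption) | exact absurd (Or.inr trivial) (by assumption)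
    apply Finset.card_le_card_of_injOn φ
    · intro z hz
      rcases Finset.mem_insert.mp hz with rfl | hzW
      · rw [hP]
        simp only [hφ, if_pos rfl]
        refine Finset.mem_filter.mpr ⟨Finset.mem_product.mpr ⟨?_, ?_⟩, hxy, hviol⟩
        · exact Finset.mem_Icc.mpr ⟨hx, by omega⟩
        · exact Finset.mem_Icc.mpr ⟨by omega, hy⟩
      · obtain ⟨h1, h2, hzx, hzy, hxzk, hzyk⟩ := hW z hzW
        have hkey := key z h1 h2 hzx hzy hxzk hzyk
        rw [hφ]
        simp only [if_neg hzx]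
        by_cases hv : 0 < vs1 l u f z x
        · rw [if_pos hv, hP]
          refine Finset.mem_filter.mpr ⟨Finset.mem_product.mpr ⟨?_, ?_⟩, ?_, ?_⟩
          · exact Finset.mem_Icc.mpr ⟨by simp; omega, by simp; omega⟩
          · exact Finset.mem_Icc.mpr ⟨by simp; omega, by simp; omega⟩
          · exact min_lt_max.mpr hzx
          · rcases lt_or_gt_of_ne hzx with hlt | hgt
            · rwa [min_eq_left hlt.le, max_eq_right hlt.le]
            · rw [min_eq_right hgt.le, max_eq_left hgt.le, vs1_symm]; exact hv
        · rw [if_neg hv, hP]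
          have hv' : 0 < vs1 l u f z y := hkey.resolve_left hv
          refine Finset.mem_filter.mpr ⟨Finset.mem_product.mpr ⟨?_, ?_⟩, ?_, ?_⟩
          · exact Finset.mem_Icc.mpr ⟨by simp; omega, by simp; omega⟩
          · exact Finset.mem_Icc.mpr ⟨by simp; omega, by simp; omega⟩
          · exact min_lt_max.mpr hzy
          · rcases lt_or_gt_of_ne hzy with hlt | hgt
            · rwa [min_eq_left hlt.le, max_eq_right hlt.le]
            · rw [min_eq_right hgt.le, max_eq_left hgt.le, vs1_symm]; exact hv'
    · intro a ha b hb hab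
      have h := congrArg ψ hab
      rwa [hψ a ha, hψ b hb] at h
  -- final case analysis
  by_cases hcase1 : kc ≤ x
  · set W := (Finset.Icc (x + 1 - kc) (y - 1)).erase x with hW
    have hmem : x ∈ Finset.Icc (x + 1 - kc) (y - 1) := Finset.mem_Icc.mpr ⟨by omega, by omega⟩
    have hWcard : W.card = y - 1 + 1 - (x + 1 - kc) - 1 := by
      rw [hW, Finset.card_erase_of_mem hmem, Nat.card_Icc]
    have hcount := count W ?_
    · have hkcle : kc ≤ W.card + 1 := by omega
      calc min c ((n : ℝ) - 1) ≤ c := min_le_left _ _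
        _ ≤ (kc : ℝ) := hc_le
        _ ≤ ((W.card + 1 : ℕ) : ℝ) := Nat.cast_le.mpr hkcle
        _ ≤ (P.card : ℝ) := Nat.cast_le.mpr hcount
    · intro z hz
      rw [hW, Finset.mem_erase, Finset.mem_Icc] at hz
      refine ⟨by omega, by omega, hz.1, by omega, by omega, by omega⟩
  · by_cases hcase2 : y + kc - 1 ≤ n
    · set W := (Finset.Icc (x + 1) (y + kc - 1)).erase y with hW
      have hmem : y ∈ Finset.Icc (x + 1) (y + kc - 1) := Finset.mem_Icc.mpr ⟨by omega, by omega⟩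
      have hWcard : W.card = y + kc - 1 + 1 - (x + 1) - 1 := by
        rw [hW, Finset.card_erase_of_mem hmem, Nat.card_Icc]
      have hcount := count W ?_
      · have hkcle : kc ≤ W.card + 1 := by omega
        calc min c ((n : ℝ) - 1) ≤ c := min_le_left _ _
          _ ≤ (kc : ℝ) := hc_le
          _ ≤ ((W.card + 1 : ℕ) : ℝ) := Nat.cast_le.mpr hkcle
          _ ≤ (P.card : ℝ) := Nat.cast_le.mpr hcount
      · intro z hz
        rw [hW, Finset.mem_erase, Finset.mem_Icc] at hz
        refine ⟨by omega, by omega, by omega, hz.1, by omega, by omega⟩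
    · set W := ((Finset.Icc 1 n).erase y).erase x with hW
      have hmemy : y ∈ Finset.Icc 1 n := Finset.mem_Icc.mpr ⟨by omega, hy⟩
      have hmemx : x ∈ (Finset.Icc 1 n).erase y :=
        Finset.mem_erase.mpr ⟨by omega, Finset.mem_Icc.mpr ⟨hx, by omega⟩⟩
      have hWcard : W.card = n - 1 - 1 := by
        rw [hW, Finset.card_erase_of_mem hmemx, Finset.card_erase_of_mem hmemy, Nat.card_Icc]
        omega
      have hcount := count W ?_
      · have hle : n - 1 ≤ W.card + 1 := by omega
        calc min c ((n : ℝ) - 1) ≤ (n : ℝ) - 1 := min_le_right _ _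
          _ = ((n - 1 : ℕ) : ℝ) := by
              rw [Nat.cast_sub (by omega : 1 ≤ n)]; norm_num
          _ ≤ ((W.card + 1 : ℕ) : ℝ) := Nat.cast_le.mpr hle
          _ ≤ (P.card : ℝ) := Nat.cast_le.mpr hcount
      · intro z hz
        rw [hW, Finset.mem_erase, Finset.mem_erase, Finset.mem_Icc] at hz
        refine ⟨by omega, by omega, hz.1, hz.2.1, by omega, by omega⟩
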